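/- (Higman's primitivity criterion.) Let G be a group acting transitively on a set X. Then the action of G on X is primitive (i.e. preprimitive: every block of the action is a trivial block) if and only if for every pair of distinct points x, y ∈ X, the orbital graph of (x, y) is weakly connected; that is, for all a, b ∈ X, the pair (a, b) lies in the reflexive-transitive closure of the symmetric relation R on X defined by: u R v if and only if there exists g ∈ G with (g·x, g·y) = (u, v) or (g·x, g·y) = (v, u). -/

import Mathlib

open Pointwise

/-- **Higman's primitivity criterion.** Let `G` act transitively on `X`. Then
the action is primitive (every block `B` — i.e. a set with `g • B = B` or `g • B ∩ B = ∅`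
for each `g` — is trivial: empty, a singleton, or all of `X`) if and only if for every pair
of distinct points `x ≠ y`, the orbital graph of `(x, y)` is weakly connected: every two
points `a, b` are joined by the reflexive-transitive closure of the symmetrisation of the
orbital `G • (x, y)`. -/
theorem statement6 (G : Type*) [Group G] (X : Type*) [MulAction G X]
    (htrans : MulAction.IsPretransitive G X) :
    (∀ B : Set X, (∀ g : G, g • B = B ∨ g • B ∩ B = ∅) →
        (B.Subsingleton ∨ B = Set.univ)) ↔
      ∀ x y : X, x ≠ y → ∀ a b : X,
        Relation.ReflTransGen
          (fun u v => ∃ g : G, (g • x = u ∧ g • y = v) ∨ (g • x = v ∧ g • y = u))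
          a b := by
  constructor
  · intro hprim x y hxy a b
    set R : X → X → Prop :=
      fun u v => ∃ g : G, (g • x = u ∧ g • y = v) ∨ (g • x = v ∧ g • y = u) with hRdef
    have hsymm : Symmetric R := by
      rintro u v ⟨g, h⟩
      exact ⟨g, h.symm⟩
    have hsymmT : Symmetric (Relation.ReflTransGen R) :=
      fun a b h => by
        induction h with
        | refl => exact Relation.ReflTransGen.refl
        | tail _ h2 ih => exact (Relation.ReflTransGen.single (hsymm h2)).trans ih
    have hinv : ∀ (g : G) (u v : X), R u v → R (g • u) (g • v) := by
      rintro g u v ⟨h, hc | hc⟩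
      · exact ⟨g * h, Or.inl ⟨by rw [mul_smul, hc.1], by rw [mul_smul, hc.2]⟩⟩
      · exact ⟨g * h, Or.inr ⟨by rw [mul_smul, hc.1], by rw [mul_smul, hc.2]⟩⟩
    have hinvT : ∀ (g : G) (u v : X), Relation.ReflTransGen R u v →
        Relation.ReflTransGen R (g • u) (g • v) := by
      intro g u v h
      induction h with
      | refl => exact Relation.ReflTransGen.refl
      | tail _ h2 ih => exact ih.tail (hinv g _ _ h2)
    set B : Set X := {v | Relation.ReflTransGen R x v} with hBdef
    have hmemB : ∀ v, v ∈ B ↔ Relation.ReflTransGen R x v := fun v => Iff.rfl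
    have key : ∀ g : G, Relation.ReflTransGen R x (g • x) → g • B = B := by
      intro g hg
      ext v
      rw [Set.mem_smul_set_iff_inv_smul_mem, hmemB, hmemB]
      constructor
      · intro h
        have := hinvT g _ _ h
        rw [smul_inv_smul] at this
        exact hg.trans this
      · intro h
        have h1 := hinvT g⁻¹ _ _ h
        have h2 := hinvT g⁻¹ _ _ hg
        rw [inv_smul_smul] at h2
        exact (hsymmT h2).trans h1
    have hblock : ∀ g : G, g • B = B ∨ g • B ∩ B = ∅ := by
      intro g
      by_cases hne : g • B ∩ B = ∅
      · exact Or.inr hne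
      · left
        obtain ⟨v, hv1, hv2⟩ := Set.nonempty_iff_ne_empty.2 hne
        rw [Set.mem_smul_set_iff_inv_smul_mem, hmemB] at hv1
        rw [hmemB] at hv2
        have h1 := hinvT g _ _ hv1
        rw [smul_inv_smul] at h1
        exact key g (hv2.trans (hsymmT h1))
      -- done
    have hx : x ∈ B := Relation.ReflTransGen.refl
    have hy : y ∈ B := Relation.ReflTransGen.single ⟨1, Or.inl ⟨one_smul _ _, one_smul _ _⟩⟩
    rcases hprim B hblock with hss | huniv
    · exact absurd (hss hx hy) hxy
    · have hall : ∀ v : X, Relation.ReflTransGen R x v := by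
        intro v
        have : v ∈ B := huniv ▸ Set.mem_univ v
        exact this
      exact (hsymmT (hall a)).trans (hall b)
  · intro hconn B hB
    by_cases hss : B.Subsingleton
    · exact Or.inl hss
    · right
      rw [Set.not_subsingleton_iff] at hss
      obtain ⟨x, hx, y, hy, hxy⟩ := hss
      have step : ∀ u v, (∃ g : G, (g • x = u ∧ g • y = v) ∨ (g • x = v ∧ g • y = u)) →
          u ∈ B → v ∈ B := by
        rintro u v ⟨g, ⟨hgx, hgy⟩ | ⟨hgx, hgy⟩⟩ hu
        · have hne : g • B ∩ B ≠ ∅ := by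
            intro h
            have : u ∈ g • B ∩ B := ⟨hgx ▸ Set.smul_mem_smul_set hx, hu⟩
            rw [h] at this
            exact this
          have heq := (hB g).resolve_right hne
          rw [← hgy, ← heq]
          exact Set.smul_mem_smul_set hy
        · have hne : g • B ∩ B ≠ ∅ := by
            intro h
            have : u ∈ g • B ∩ B := ⟨hgy ▸ Set.smul_mem_smul_set hy, hu⟩
            rw [h] at this
            exact this
          have heq := (hB g).resolve_right hne
          rw [← hgx, ← heq]
          exact Set.smul_mem_smul_set hx
      ext b
      simp only [Set.mem_univ, iff_true]
      have h := hconn x y hxy x b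
      induction h with
      | refl => exact hx
      | tail _ h2 ih => exact step _ _ h2 ih
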